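/- Let U ⊆ B(H₁,H₂) be a subspace, φ = Map(U), and S = {(P,Q) : P a projection on H₁, Q a projection on H₂, φ(P) ≤ 1 − Q}. Then S is a bilattice which is closed under arbitrary mixed suprema/infima: for any family (Pᵢ,Qᵢ) in S, both (⨆ᵢPᵢ, ⨅ᵢQᵢ) and (⨅ᵢPᵢ, ⨆ᵢQᵢ) belong to S. -/

import Mathlib

noncomputable section

section Defs

variable {H H₁ H₂ : Type*}
variable [NormedAddCommGroup H] [InnerProductSpace ℂ H] [CompleteSpace H]
variable [NormedAddCommGroup H₁] [InnerProductSpace ℂ H₁] [CompleteSpace H₁]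
variable [NormedAddCommGroup H₂] [InnerProductSpace ℂ H₂] [CompleteSpace H₂]

/-- `P` is an orthogonal projection operator. -/
def IsProjOp (P : H →L[ℂ] H) : Prop :=
  IsSelfAdjoint P ∧ P.comp P = P

/-- The orthogonal projection onto the closure of `K`, as an operator `H →L[ℂ] H`. -/
def projOf (K : Submodule ℂ H) : H →L[ℂ] H :=
  K.topologicalClosure.subtypeL.comp K.topologicalClosure.orthogonalProjectionOnto

/-- The supremum of a family of projections: projection onto closed span of ranges. -/
def pSup {ι : Type*} (f : ι → H →L[ℂ] H) : H →L[ℂ] H :=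
  projOf (⨆ i, LinearMap.range (f i : H →ₗ[ℂ] H))

/-- The infimum of a family of projections: projection onto intersection of ranges. -/
def pInf {ι : Type*} (f : ι → H →L[ℂ] H) : H →L[ℂ] H :=
  projOf (⨅ i, LinearMap.range (f i : H →ₗ[ℂ] H))

/-- Binary infimum of projections. -/
def pAnd (P Q : H →L[ℂ] H) : H →L[ℂ] H := projOf (LinearMap.range (P : H →ₗ[ℂ] H) ⊓ LinearMap.range (Q : H →ₗ[ℂ] H))

/-- Binary supremum of projections. -/
def pOr (P Q : H →L[ℂ] H) : H →L[ℂ] H := projOf (LinearMap.range (P : H →ₗ[ℂ] H) ⊔ LinearMap.range (Q : H →ₗ[ℂ] H))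

/-- Order on projections: inclusion of ranges. -/
def pLe (P Q : H →L[ℂ] H) : Prop :=
  LinearMap.range (P : H →ₗ[ℂ] H) ≤ LinearMap.range (Q : H →ₗ[ℂ] H)

/-- `span (U ξ)`. -/
def opSpan (U : Set (H₁ →L[ℂ] H₂)) (ξ : H₁) : Submodule ℂ H₂ :=
  Submodule.span ℂ {y | ∃ T ∈ U, T ξ = y}

/-- The reflexive hull of a set of operators. -/
def RefSet (U : Set (H₁ →L[ℂ] H₂)) : Set (H₁ →L[ℂ] H₂) :=
  {T | ∀ ξ : H₁, T ξ ∈ (opSpan U ξ).topologicalClosure}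

/-- `Map U`: sends a projection `P` to the projection onto the closed span of `{T (P ξ)}`. -/
def mapU (U : Set (H₁ →L[ℂ] H₂)) (P : H₁ →L[ℂ] H₁) : H₂ →L[ℂ] H₂ :=
  projOf (Submodule.span ℂ {y | ∃ T ∈ U, ∃ ξ, T (P ξ) = y})

/-- The masa-bimodule `M(S)` associated to a bilattice. -/
def MS (S : Set ((H₁ →L[ℂ] H₁) × (H₂ →L[ℂ] H₂))) : Set (H₁ →L[ℂ] H₂) :=
  {T | ∀ pq ∈ S, pq.2.comp (T.comp pq.1) = 0}

/-- The bilattice `Bil(U)` of a set of operators. -/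
def BilU (U : Set (H₁ →L[ℂ] H₂)) : Set ((H₁ →L[ℂ] H₁) × (H₂ →L[ℂ] H₂)) :=
  {pq | IsProjOp pq.1 ∧ IsProjOp pq.2 ∧ ∀ T ∈ U, pq.2.comp (T.comp pq.1) = 0}

/-- `Alg(L)`: operators leaving the range of every projection of `L` invariant. -/
def AlgL (L : Set (H →L[ℂ] H)) : Set (H →L[ℂ] H) :=
  {T | ∀ P ∈ L, ∀ x ∈ LinearMap.range (P : H →ₗ[ℂ] H), T x ∈ LinearMap.range (P : H →ₗ[ℂ] H)}

/-- `Lat(A)`: projections `P` with `(1-P) A P = 0`. -/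
def LatA (A : Set (H →L[ℂ] H)) : Set (H →L[ℂ] H) :=
  {P | IsProjOp P ∧ ∀ T ∈ A, (1 - P).comp (T.comp P) = 0}

/-- `Op(θ)` for a map `θ` defined on a set of projections `L`. -/
def OpTh (L : Set (H₁ →L[ℂ] H₁)) (θ : (H₁ →L[ℂ] H₁) → (H₂ →L[ℂ] H₂)) : Set (H₁ →L[ℂ] H₂) :=
  {T | ∀ P ∈ L, (1 - θ P).comp (T.comp P) = 0}

lemma range_projOf (K : Submodule ℂ H) :
    LinearMap.range (projOf K : H →ₗ[ℂ] H) = K.topologicalClosure := by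
  ext x
  constructor
  · rintro ⟨y, rfl⟩
    exact (K.topologicalClosure.orthogonalProjectionOnto y).2
  · intro hx
    exact ⟨x, (Submodule.starProjection_eq_self_iff (K := K.topologicalClosure)).mpr hx⟩

lemma isProjOp_projOf (K : Submodule ℂ H) : IsProjOp (projOf K) := by
  refine ⟨isSelfAdjoint_starProjection K.topologicalClosure, ?_⟩
  ext x
  simp only [ContinuousLinearMap.comp_apply]
  show projOf K (projOf K x) = projOf K x
  have h : (projOf K x) ∈ K.topologicalClosure :=
    (K.topologicalClosure.orthogonalProjectionOnto x).2
  exact (Submodule.starProjection_eq_self_iff (K := K.topologicalClosure)).mpr h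

lemma isProjOp_apply_eq {P : H →L[ℂ] H} (hP : IsProjOp P) {x : H} :
    x ∈ LinearMap.range (P : H →ₗ[ℂ] H) ↔ P x = x := by
  constructor
  · rintro ⟨y, rfl⟩
    have := congrArg (fun A : H →L[ℂ] H => A y) hP.2
    simpa using this
  · intro h; exact ⟨x, h⟩

lemma range_one_sub {Q : H →L[ℂ] H} (hQ : IsProjOp Q) :
    LinearMap.range ((1 - Q : H →L[ℂ] H) : H →ₗ[ℂ] H) = (LinearMap.range (Q : H →ₗ[ℂ] H))ᗮ := by
  have hadj : ContinuousLinearMap.adjoint Q = Q := hQ.1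
  ext x
  have h1 : x ∈ LinearMap.range ((1 - Q : H →L[ℂ] H) : H →ₗ[ℂ] H) ↔ Q x = 0 := by
    constructor
    · rintro ⟨y, rfl⟩
      have := congrArg (fun A : H →L[ℂ] H => A y) hQ.2
      simp only [ContinuousLinearMap.comp_apply] at this
      simp [ContinuousLinearMap.sub_apply, map_sub, this]
    · intro h
      exact ⟨x, by simp [ContinuousLinearMap.sub_apply, h]⟩
  have hsym : ∀ a b : H, inner ℂ (Q a) b = inner ℂ a (Q b) := by
    intro a b
    conv_lhs => rw [← hadj]
    exact ContinuousLinearMap.adjoint_inner_left Q b a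
  rw [h1, Submodule.mem_orthogonal]
  constructor
  · intro h u hu
    obtain ⟨y, rfl⟩ := hu
    rw [ContinuousLinearMap.coe_coe, hsym, h, inner_zero_right]
  · intro h
    have hQQ : Q (Q x) = Q x := by
      have := congrArg (fun A : H →L[ℂ] H => A x) hQ.2
      simpa using this
    have h2 : inner ℂ (Q x) (Q x) = 0 := by
      rw [hsym x (Q x), hQQ, ← hsym x x]
      exact h (Q x) ⟨x, rfl⟩
    exact inner_self_eq_zero.mp h2

/-- The orthogonality condition between two subspaces, relative to `U`. -/
def Cnd (U : Set (H₁ →L[ℂ] H₂)) (A : Submodule ℂ H₁) (B : Submodule ℂ H₂) : Prop :=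
  ∀ T ∈ U, ∀ x ∈ A, ∀ η ∈ B, inner ℂ η (T x) = 0

lemma cnd_mono {U : Set (H₁ →L[ℂ] H₂)} {A A' : Submodule ℂ H₁} {B B' : Submodule ℂ H₂}
    (hA : A' ≤ A) (hB : B' ≤ B) (h : Cnd U A B) : Cnd U A' B' :=
  fun T hT x hx η hη => h T hT x (hA hx) η (hB hη)

lemma cnd_closure_left {U : Set (H₁ →L[ℂ] H₂)} {A : Submodule ℂ H₁} {B : Submodule ℂ H₂}
    (h : Cnd U A B) : Cnd U A.topologicalClosure B := by
  intro T hT x hx η hη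
  have hcont : Continuous fun x : H₁ => inner ℂ η (T x) :=
    Continuous.inner continuous_const T.continuous
  have hcl : IsClosed {x : H₁ | inner ℂ η (T x) = 0} :=
    isClosed_eq hcont continuous_const
  have hsub : (A : Set H₁) ⊆ {x : H₁ | inner ℂ η (T x) = 0} :=
    fun x hx => h T hT x hx η hη
  exact closure_minimal hsub hcl hx

lemma cnd_closure_right {U : Set (H₁ →L[ℂ] H₂)} {A : Submodule ℂ H₁} {B : Submodule ℂ H₂}
    (h : Cnd U A B) : Cnd U A B.topologicalClosure := by
  intro T hT x hx η hη
  have hcont : Continuous fun η : H₂ => inner ℂ η (T x) :=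
    Continuous.inner continuous_id continuous_const
  have hcl : IsClosed {η : H₂ | inner ℂ η (T x) = 0} :=
    isClosed_eq hcont continuous_const
  have hsub : (B : Set H₂) ⊆ {η : H₂ | inner ℂ η (T x) = 0} :=
    fun η hη => h T hT x hx η hη
  exact closure_minimal hsub hcl hη

lemma cnd_iSup_left {U : Set (H₁ →L[ℂ] H₂)} {ι : Sort*} {A : ι → Submodule ℂ H₁}
    {B : Submodule ℂ H₂} (h : ∀ i, Cnd U (A i) B) : Cnd U (⨆ i, A i) B := by
  intro T hT x hx η hη
  refine Submodule.iSup_induction A (motive := fun x => inner ℂ η (T x) = 0) hx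
    (fun i x hxi => h i T hT x hxi η hη) (by simp) ?_
  intro x y hx hy
  rw [map_add, inner_add_right, hx, hy, add_zero]

lemma cnd_iSup_right {U : Set (H₁ →L[ℂ] H₂)} {ι : Sort*} {A : Submodule ℂ H₁}
    {B : ι → Submodule ℂ H₂} (h : ∀ i, Cnd U A (B i)) : Cnd U A (⨆ i, B i) := by
  intro T hT x hx η hη
  refine Submodule.iSup_induction B (motive := fun η => inner ℂ η (T x) = 0) hη
    (fun i η hηi => h i T hT x hx η hηi) (by simp) ?_
  intro a b ha hb
  rw [inner_add_left, ha, hb, add_zero]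

lemma cnd_sup_left {U : Set (H₁ →L[ℂ] H₂)} {A₁ A₂ : Submodule ℂ H₁} {B : Submodule ℂ H₂}
    (h₁ : Cnd U A₁ B) (h₂ : Cnd U A₂ B) : Cnd U (A₁ ⊔ A₂) B := by
  intro T hT x hx η hη
  obtain ⟨a, ha, b, hb, rfl⟩ := Submodule.mem_sup.mp hx
  rw [map_add, inner_add_right, h₁ T hT a ha η hη, h₂ T hT b hb η hη, add_zero]

lemma cnd_sup_right {U : Set (H₁ →L[ℂ] H₂)} {A : Submodule ℂ H₁} {B₁ B₂ : Submodule ℂ H₂}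
    (h₁ : Cnd U A B₁) (h₂ : Cnd U A B₂) : Cnd U A (B₁ ⊔ B₂) := by
  intro T hT x hx η hη
  obtain ⟨a, ha, b, hb, rfl⟩ := Submodule.mem_sup.mp hη
  rw [inner_add_left, h₁ T hT x hx a ha, h₂ T hT x hx b hb, add_zero]

lemma pLe_iff_cnd {U : Set (H₁ →L[ℂ] H₂)} {P : H₁ →L[ℂ] H₁} {Q : H₂ →L[ℂ] H₂}
    (hQ : IsProjOp Q) :
    pLe (mapU U P) (1 - Q) ↔ Cnd U (LinearMap.range (P : H₁ →ₗ[ℂ] H₁)) (LinearMap.range (Q : H₂ →ₗ[ℂ] H₂)) := by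
  unfold pLe mapU
  rw [range_projOf, range_one_sub hQ]
  constructor
  · intro h T hT x hx η hη
    obtain ⟨ξ, rfl⟩ := hx
    have hmem : T (P ξ) ∈ (Submodule.span ℂ {y | ∃ T ∈ U, ∃ ξ, T (P ξ) = y}).topologicalClosure :=
      Submodule.le_topologicalClosure _ (Submodule.subset_span ⟨T, hT, ξ, rfl⟩)
    exact (Submodule.mem_orthogonal _ _).mp (h hmem) η hη
  · intro h
    refine Submodule.topologicalClosure_minimal _ ?_ (Submodule.isClosed_orthogonal _)
    rw [Submodule.span_le]
    rintro y ⟨T, hT, ξ, rfl⟩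
    exact (Submodule.mem_orthogonal _ _).mpr (fun η hη => h T hT (P ξ) ⟨ξ, rfl⟩ η hη)

lemma isProjOp_zero : IsProjOp (0 : H →L[ℂ] H) := ⟨by simp [IsSelfAdjoint], by ext x; simp⟩

lemma isProjOp_one : IsProjOp (1 : H →L[ℂ] H) := ⟨by simp [IsSelfAdjoint], by ext x; simp⟩

theorem stmt5 (U : Set (H₁ →L[ℂ] H₂))
    (S : Set ((H₁ →L[ℂ] H₁) × (H₂ →L[ℂ] H₂)))
    (hS : S = {pq | IsProjOp pq.1 ∧ IsProjOp pq.2 ∧ pLe (mapU U pq.1) (1 - pq.2)}) :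
    (((0 : H₁ →L[ℂ] H₁), (0 : H₂ →L[ℂ] H₂)) ∈ S ∧
     ((1 : H₁ →L[ℂ] H₁), (0 : H₂ →L[ℂ] H₂)) ∈ S ∧
     ((0 : H₁ →L[ℂ] H₁), (1 : H₂ →L[ℂ] H₂)) ∈ S) ∧
    (∀ p ∈ S, ∀ q ∈ S,
      (pAnd p.1 q.1, pOr p.2 q.2) ∈ S ∧ (pOr p.1 q.1, pAnd p.2 q.2) ∈ S) ∧
    (∀ (ι : Type) (f : ι → ((H₁ →L[ℂ] H₁) × (H₂ →L[ℂ] H₂))), (∀ i, f i ∈ S) →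
      (pSup (fun i => (f i).1), pInf (fun i => (f i).2)) ∈ S ∧
      (pInf (fun i => (f i).1), pSup (fun i => (f i).2)) ∈ S) := by
  subst hS
  refine ⟨⟨?_, ?_, ?_⟩, ?_, ?_⟩
  · exact ⟨isProjOp_zero, isProjOp_zero, (pLe_iff_cnd isProjOp_zero).mpr
      (by rintro T hT x ⟨ξ, rfl⟩ η hη; simp)⟩
  · exact ⟨isProjOp_one, isProjOp_zero, (pLe_iff_cnd isProjOp_zero).mpr
      (by rintro T hT x hx η ⟨ξ, rfl⟩; simp)⟩
  · exact ⟨isProjOp_zero, isProjOp_one, (pLe_iff_cnd isProjOp_one).mpr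
      (by rintro T hT x ⟨ξ, rfl⟩ η hη; simp)⟩
  · rintro p ⟨hp1, hp2, hp3⟩ q ⟨hq1, hq2, hq3⟩
    have hc₁ : Cnd U (LinearMap.range (p.1 : H₁ →ₗ[ℂ] H₁)) (LinearMap.range (p.2 : H₂ →ₗ[ℂ] H₂)) :=
      (pLe_iff_cnd hp2).mp hp3
    have hc₂ : Cnd U (LinearMap.range (q.1 : H₁ →ₗ[ℂ] H₁)) (LinearMap.range (q.2 : H₂ →ₗ[ℂ] H₂)) :=
      (pLe_iff_cnd hq2).mp hq3
    constructor
    · refine ⟨isProjOp_projOf _, isProjOp_projOf _, (pLe_iff_cnd (isProjOp_projOf _)).mpr ?_⟩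
      unfold pAnd pOr
      rw [range_projOf, range_projOf]
      exact cnd_closure_right (cnd_closure_left (cnd_sup_right
        (cnd_mono inf_le_left le_rfl hc₁) (cnd_mono inf_le_right le_rfl hc₂)))
    · refine ⟨isProjOp_projOf _, isProjOp_projOf _, (pLe_iff_cnd (isProjOp_projOf _)).mpr ?_⟩
      unfold pOr pAnd
      rw [range_projOf, range_projOf]
      exact cnd_closure_right (cnd_closure_left (cnd_sup_left
        (cnd_mono le_rfl inf_le_left hc₁) (cnd_mono le_rfl inf_le_right hc₂)))
  · intro ι f hf
    have hc : ∀ i, Cnd U (LinearMap.range ((f i).1 : H₁ →ₗ[ℂ] H₁)) (LinearMap.range ((f i).2 : H₂ →ₗ[ℂ] H₂)) :=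
      fun i => (pLe_iff_cnd (hf i).2.1).mp (hf i).2.2
    constructor
    · refine ⟨isProjOp_projOf _, isProjOp_projOf _, (pLe_iff_cnd (isProjOp_projOf _)).mpr ?_⟩
      unfold pSup pInf
      rw [range_projOf, range_projOf]
      refine cnd_closure_right (cnd_closure_left (cnd_iSup_left fun i => ?_))
      exact cnd_mono le_rfl (iInf_le _ i) (hc i)
    · refine ⟨isProjOp_projOf _, isProjOp_projOf _, (pLe_iff_cnd (isProjOp_projOf _)).mpr ?_⟩
      unfold pInf pSup
      rw [range_projOf, range_projOf]
      refine cnd_closure_right (cnd_closure_left (cnd_iSup_right fun i => ?_))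
      exact cnd_mono (iInf_le _ i) le_rfl (hc i)

end Defs
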